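/- Let g : ℝ² → ℂ be twice continuously differentiable and suppose that g(x) + g(y) = g(w) + g(z) for every quadruple x, y, w, z ∈ ℝ² with x + y = w + z and |x|² + |y|² = |w|² + |z|². Then there exist a, c ∈ ℂ and b ∈ ℂ² such that g(x) = a|x|² + b·x + c for all x ∈ ℝ². -/

import Mathlib

noncomputable section

abbrev R2 := EuclideanSpace ℝ (Fin 2)

private def Pt (a b : ℝ) : R2 := WithLp.toLp 2 ![a, b]

private lemma Pt_add (a b c d : ℝ) : Pt a b + Pt c d = Pt (a+c) (b+d) := by
  ext i; fin_cases i <;> simp [Pt]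

private lemma Pt_normsq (a b : ℝ) : ‖Pt a b‖^2 = a^2 + b^2 := by
  rw [EuclideanSpace.norm_eq, Real.sq_sqrt (by positivity)]
  simp [Pt, Fin.sum_univ_two]

private lemma Pt_eta (x : R2) : Pt (x 0) (x 1) = x := by
  ext i; fin_cases i <;> simp [Pt]

private lemma Pt_smul (t : ℝ) : t • Pt 1 0 = Pt t 0 := by
  ext i; fin_cases i <;> simp [Pt]

private lemma Pt_smul' (t : ℝ) : t • Pt 0 1 = Pt 0 t := by
  ext i; fin_cases i <;> simp [Pt]

/-- A C² function with constant symmetric second differences is quadratic. -/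
private lemma quad_of_secdiff (f : ℝ → ℂ) (hf : ContDiff ℝ 2 f) (C : ℝ → ℂ)
    (h : ∀ p a : ℝ, f (p+a) + f (p-a) = 2 * f p + C a) :
    ∀ t : ℝ, f t = f 0 + deriv f 0 * t + (deriv f 1 - deriv f 0)/2 * t^2 := by
  have hd : Differentiable ℝ f := hf.differentiable (by norm_num)
  have h2 : ContDiff ℝ (1+1 : ℕ) f := by exact_mod_cast hf
  have hf' : Continuous (deriv f) := hf.continuous_deriv (by norm_num)
  -- Jensen equation for deriv f
  have jensen : ∀ p a : ℝ, deriv f (p+a) + deriv f (p-a) = 2 * deriv f p := by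
    intro p a
    have hF : ∀ q : ℝ, HasDerivAt (fun q => f (q+a) + f (q-a))
        (deriv f (q+a) + deriv f (q-a)) q := by
      intro q
      have h1 : HasDerivAt (fun q : ℝ => f (q+a)) (deriv f (q+a)) q := by
        simpa [Function.comp_def] using (HasDerivAt.scomp q (hd (q+a)).hasDerivAt
          ((hasDerivAt_id q).add_const a))
      have h2 : HasDerivAt (fun q : ℝ => f (q-a)) (deriv f (q-a)) q := by
        simpa [Function.comp_def] using (HasDerivAt.scomp q (hd (q-a)).hasDerivAt
          ((hasDerivAt_id q).sub_const a))
      exact h1.add h2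
    have hG : ∀ q : ℝ, HasDerivAt (fun q => f (q+a) + f (q-a)) (2 * deriv f q) q := by
      intro q
      have : HasDerivAt (fun q : ℝ => 2 * f q + C a) (2 * deriv f q) q := by
        simpa using ((hd q).hasDerivAt.const_mul (2:ℂ)).add_const (C a)
      exact this.congr_of_eventuallyEq (Filter.Eventually.of_forall fun q => h q a)
    exact (hF p).unique (hG p)
  -- deriv f is affine
  have hadd : ∀ u v : ℝ, deriv f (u+v) - deriv f 0
      = (deriv f u - deriv f 0) + (deriv f v - deriv f 0) := by
    intro u v
    have e1 := jensen ((u+v)/2) ((u-v)/2)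
    have e2 := jensen ((u+v)/2) ((u+v)/2)
    have a1 : (u+v)/2 + (u-v)/2 = u := by ring
    have a2 : (u+v)/2 - (u-v)/2 = v := by ring
    have a3 : (u+v)/2 + (u+v)/2 = u+v := by ring
    have a4 : (u+v)/2 - (u+v)/2 = 0 := by ring
    rw [a1, a2] at e1
    rw [a3, a4] at e2
    linear_combination e2 - e1
  set m : ℂ := deriv f 1 - deriv f 0 with hm
  have hlin : ∀ t : ℝ, deriv f t = deriv f 0 + t * m := by
    have hL : ∀ t : ℝ, deriv f t - deriv f 0 = t • (deriv f 1 - deriv f 0) := by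
      intro t
      have h1 := ((AddMonoidHom.mk' (fun t => deriv f t - deriv f 0) hadd).toRealLinearMap
        (hf'.sub continuous_const)).map_smul t (1:ℝ)
      have h1' : deriv f (t • (1:ℝ)) - deriv f 0 = t • (deriv f 1 - deriv f 0) := h1
      simpa [AddMonoidHom.coe_toRealLinearMap, AddMonoidHom.mk'_apply, smul_eq_mul] using h1'
    intro t
    have hh := hL t
    rw [Complex.real_smul] at hh
    rw [hm]
    linear_combination hh
  -- integrate
  intro t
  set q : ℝ → ℂ := fun t => f 0 + deriv f 0 * t + m/2 * t^2 with hq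
  have hr : ∀ s : ℝ, HasDerivAt (fun s => f s - q s) 0 s := by
    intro s
    have h1 : HasDerivAt q (deriv f 0 + m/2 * (2*s)) s := by
      have hid : HasDerivAt (fun s : ℝ => (s:ℂ)) 1 s := by
        simpa using (hasDerivAt_id s).ofReal_comp
      have hsq : HasDerivAt (fun s : ℝ => (s:ℂ)^2) (2*s) s := by
        have h0 := hid.mul hid
        have h2 : (fun s : ℝ => (s:ℂ) * (s:ℂ)) = fun s : ℝ => (s:ℂ)^2 := by
          funext s; ring
        simp only [Pi.mul_def] at h0
        rw [h2] at h0
        convert h0 using 1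
        · rfl
        · push_cast; ring
      have := ((hid.const_mul (deriv f 0)).const_add (f 0)).add (hsq.const_mul (m/2))
      simpa [hq, mul_comm, mul_assoc, mul_left_comm, Pi.add_def] using this
    have h2 := (hd s).hasDerivAt.sub h1
    have : deriv f s - (deriv f 0 + m/2 * (2*s)) = 0 := by
      rw [hlin s]; push_cast; ring
    rwa [this] at h2
  have hconst := is_const_of_deriv_eq_zero (f := fun s => f s - q s)
    (fun s => (hr s).differentiableAt) (fun s => (hr s).deriv) t 0
  have hq0 : q 0 = f 0 := by simp [hq]
  have : f t - q t = f 0 - q 0 := hconst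
  rw [hq0] at this
  have : f t = q t := by linear_combination this
  rw [this, hq]

theorem additive_functional_equation_quadratic (g : R2 → ℂ) (hg : ContDiff ℝ 2 g)
    (hfun : ∀ x y w z : R2, x + y = w + z → ‖x‖ ^ 2 + ‖y‖ ^ 2 = ‖w‖ ^ 2 + ‖z‖ ^ 2 →
      g x + g y = g w + g z) :
    ∃ (a c : ℂ) (b : Fin 2 → ℂ), ∀ x : R2,
      g x = a * ((‖x‖ ^ 2 : ℝ) : ℂ) + (∑ i, b i * ((x i : ℝ) : ℂ)) + c := by
  set φ : ℝ → ℂ := fun t => g (Pt t 0) with hφdef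
  set ψ : ℝ → ℂ := fun s => g (Pt 0 s) with hψdef
  set g0 : ℂ := g (Pt 0 0) with hg0
  have hφ : ContDiff ℝ 2 φ := by
    have : φ = fun t : ℝ => g (t • Pt 1 0) := by
      funext t; rw [Pt_smul]
    rw [this]
    exact hg.comp (contDiff_id.smul contDiff_const)
  have hψ : ContDiff ℝ 2 ψ := by
    have : ψ = fun s : ℝ => g (s • Pt 0 1) := by
      funext s; rw [Pt_smul']
    rw [this]
    exact hg.comp (contDiff_id.smul contDiff_const)
  -- separation of variables
  have sep : ∀ t s : ℝ, g (Pt t s) = φ t + ψ s - g0 := by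
    intro t s
    have h := hfun (Pt t 0) (Pt 0 s) (Pt 0 0) (Pt t s)
      (by rw [Pt_add, Pt_add]; norm_num)
      (by rw [Pt_normsq, Pt_normsq, Pt_normsq, Pt_normsq]; ring)
    simp only [hφdef, hψdef, hg0]
    linear_combination -h
  -- cross identity
  have cross : ∀ p q a : ℝ, g (Pt p (q+a)) + g (Pt p (q-a))
      = g (Pt (p-a) q) + g (Pt (p+a) q) := by
    intro p q a
    apply hfun
    · rw [Pt_add, Pt_add]; congr 1 <;> ring
    · rw [Pt_normsq, Pt_normsq, Pt_normsq, Pt_normsq]; ring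
  have key : ∀ p q a : ℝ, φ (p+a) + φ (p-a) - 2 * φ p
      = ψ (q+a) + ψ (q-a) - 2 * ψ q := by
    intro p q a
    have h := cross p q a
    rw [sep, sep, sep, sep] at h
    linear_combination -h
  have hφsec : ∀ p a : ℝ, φ (p+a) + φ (p-a) = 2 * φ p + (ψ a + ψ (-a) - 2 * ψ 0) := by
    intro p a
    have h := key p 0 a
    rw [zero_add, zero_sub] at h
    linear_combination h
  have hψsec : ∀ q a : ℝ, ψ (q+a) + ψ (q-a) = 2 * ψ q + (φ a + φ (-a) - 2 * φ 0) := by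
    intro q a
    have h := key 0 q a
    rw [zero_add, zero_sub] at h
    linear_combination -h
  have φform := quad_of_secdiff φ hφ _ hφsec
  have ψform := quad_of_secdiff ψ hψ _ hψsec
  set mφ : ℂ := (deriv φ 1 - deriv φ 0)/2 with hmφ
  set mψ : ℂ := (deriv ψ 1 - deriv ψ 0)/2 with hmψ
  have hmm : mφ = mψ := by
    have h := key 0 0 1
    rw [zero_add, zero_sub] at h
    have e1 := φform 1
    have e2 := φform (-1)
    have e3 := ψform 1
    have e4 := ψform (-1)
    push_cast at e1 e2 e3 e4
    rw [e1, e2, e3, e4] at h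
    linear_combination h / 2
  have hnorm : ∀ x : R2, ‖x‖^2 = (x 0)^2 + (x 1)^2 := by
    intro x
    rw [← Pt_eta x, Pt_normsq]
    simp [Pt]
  refine ⟨mφ, g0, ![deriv φ 0, deriv ψ 0], fun x => ?_⟩
  have hx : g x = φ (x 0) + ψ (x 1) - g0 := by
    rw [← Pt_eta x, sep]
    simp [Pt]
  rw [hx, φform (x 0), ψform (x 1), hnorm x, Fin.sum_univ_two]
  simp only [Matrix.cons_val_zero, Matrix.cons_val_one, Matrix.head_cons]
  have hφ0 : φ 0 = g0 := rfl
  have hψ0 : ψ 0 = g0 := rfl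
  rw [hφ0, hψ0, ← hmm]
  push_cast
  ring

end
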